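/- Let V be a real inner product space, let σ₁₂, σ₁₃, σ₂₃ ∈ ℝ, and set the capillarity coefficients χ₁ = σ₁₂ + σ₁₃ − σ₂₃, χ₂ = σ₁₂ + σ₂₃ − σ₁₃, χ₃ = σ₁₃ + σ₂₃ − σ₁₂. For any φ, ψ ∈ ℝ and a, b ∈ V define g₁ = ((1+ψ)/4)·a + ((1+φ)/4)·b, g₂ = −((1+ψ)/4)·a + ((1−φ)/4)·b, g₃ = −(1/2)·b. Then χ₁‖g₁‖² + χ₂‖g₂‖² + χ₃‖g₃‖² = (1/2)·[ σ₁₂((1+ψ)/2)²‖a‖² + ((σ₁₃(1+φ) + σ₂₃(1−φ) − (1/2)σ₁₂(1−φ²))/2)‖b‖² + (σ₁₂φ + σ₁₃ − σ₂₃)((1+ψ)/2)⟨a, b⟩ ]. -/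

import Mathlib

theorem gradient_energy_change_of_variables
    {V : Type*} [NormedAddCommGroup V] [InnerProductSpace ℝ V]
    (σ₁₂ σ₁₃ σ₂₃ χ₁ χ₂ χ₃ : ℝ)
    (hχ₁ : χ₁ = σ₁₂ + σ₁₃ - σ₂₃) (hχ₂ : χ₂ = σ₁₂ + σ₂₃ - σ₁₃)
    (hχ₃ : χ₃ = σ₁₃ + σ₂₃ - σ₁₂)
    (φ ψ : ℝ) (a b g₁ g₂ g₃ : V)
    (hg₁ : g₁ = ((1 + ψ) / 4) • a + ((1 + φ) / 4) • b)
    (hg₂ : g₂ = (-((1 + ψ) / 4)) • a + ((1 - φ) / 4) • b)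
    (hg₃ : g₃ = (-(1 / 2) : ℝ) • b) :
    χ₁ * ‖g₁‖ ^ 2 + χ₂ * ‖g₂‖ ^ 2 + χ₃ * ‖g₃‖ ^ 2 =
      1 / 2 * (σ₁₂ * ((1 + ψ) / 2) ^ 2 * ‖a‖ ^ 2 +
        (σ₁₃ * (1 + φ) + σ₂₃ * (1 - φ) - 1 / 2 * σ₁₂ * (1 - φ ^ 2)) / 2 * ‖b‖ ^ 2 +
        (σ₁₂ * φ + σ₁₃ - σ₂₃) * ((1 + ψ) / 2) * (inner ℝ a b : ℝ)) := by
  subst hχ₁ hχ₂ hχ₃ hg₁ hg₂ hg₃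
  simp only [norm_add_sq_real, norm_smul, inner_smul_left, inner_smul_right,
    real_inner_smul_left, real_inner_smul_right, starRingEnd_apply, star_trivial, mul_pow, Real.norm_eq_abs, sq_abs]
  ring
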